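/- Let (Sₜ) be a semigroup on a metric space H with global attractor A. Every point x ∈ A lies on a bounded full trajectory contained in A; that is, there exists γ : ℝ → H with γ(0) = x, Sₜγ(s) = γ(t+s) for t ≥ 0, s ∈ ℝ, and γ(ℝ) ⊆ A. -/

import Mathlib

open Metric

/-- Every point of the global attractor lies on a bounded full trajectory
contained in the attractor. -/
theorem attractor_point_on_full_trajectory
    {H : Type*} [MetricSpace H]
    (S : ℝ → H → H)
    (hcont : ∀ t ≥ (0:ℝ), Continuous (S t))
    (hS0 : ∀ y, S 0 y = y)
    (hSadd : ∀ t ≥ (0:ℝ), ∀ s ≥ (0:ℝ), ∀ y, S (t + s) y = S t (S s y))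
    (A : Set H)
    (hAc : IsCompact A)
    (hAinv : ∀ t ≥ (0:ℝ), S t '' A = A)
    (hAattr : ∀ B : Set H, Bornology.IsBounded B → ∀ ε > (0:ℝ),
      ∃ T : ℝ, ∀ t ≥ T, ∀ y ∈ B, infDist (S t y) A ≤ ε)
    (x : H) (hx : x ∈ A) :
    ∃ γ : ℝ → H, γ 0 = x ∧
      (∀ t ≥ (0:ℝ), ∀ s : ℝ, S t (γ s) = γ (t + s)) ∧
      Set.range γ ⊆ A := by
  -- backward step: every point of A has a preimage in A under S 1
  have hback : ∀ a : A, ∃ b : A, S 1 (b : H) = a := by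
    intro a
    have ha : (a : H) ∈ S 1 '' A := by rw [hAinv 1 zero_le_one]; exact a.2
    obtain ⟨b, hb, hba⟩ := ha
    exact ⟨⟨b, hb⟩, hba⟩
  choose F hF using hback
  -- the backward orbit
  set g : ℕ → A := fun n => F^[n] ⟨x, hx⟩ with hg
  have hgsucc : ∀ n : ℕ, g (n + 1) = F (g n) := by
    intro n; simp [hg, Function.iterate_succ_apply']
  -- forward flow brings g (n+k) back to g n
  have hkey : ∀ n k : ℕ, S (k : ℝ) ((g (n + k) : A) : H) = g n := by
    intro n k
    induction k with
    | zero => simpa using hS0 (g n : H)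
    | succ k ih =>
      have hcast : ((k + 1 : ℕ) : ℝ) = (k : ℝ) + 1 := by push_cast; ring
      rw [hcast, hSadd (k : ℝ) (by positivity) 1 zero_le_one]
      have : g (n + (k + 1)) = F (g (n + k)) := by
        rw [show n + (k + 1) = (n + k) + 1 by ring, hgsucc]
      rw [this, hF (g (n + k))]
      exact ih
  -- monotone compatibility
  have hcompat : ∀ (s : ℝ) (n m : ℕ), n ≤ m → 0 ≤ s + n →
      S (s + m) ((g m : A) : H) = S (s + n) ((g n : A) : H) := by
    intro s n m hnm hsn
    obtain ⟨k, rfl⟩ := Nat.exists_eq_add_of_le hnm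
    have h1 : (s + ((n + k : ℕ) : ℝ)) = (s + n) + (k : ℝ) := by push_cast; ring
    rw [h1, hSadd (s + n) hsn (k : ℝ) (by positivity), hkey n k]
  -- the trajectory
  refine ⟨fun s => S (s + (⌈-s⌉₊ : ℝ)) ((g ⌈-s⌉₊ : A) : H), ?_, ?_, ?_⟩
  · have : (⌈-(0:ℝ)⌉₊ : ℕ) = 0 := by norm_num
    simp only [this]
    simpa [hg] using hS0 x
  · intro t ht s
    have hwd : ∀ (u : ℝ) (n : ℕ), 0 ≤ u + n →
        S (u + n) ((g n : A) : H) = S (u + (⌈-u⌉₊ : ℝ)) ((g ⌈-u⌉₊ : A) : H) := by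
      intro u n hun
      have hceil : 0 ≤ u + (⌈-u⌉₊ : ℝ) := by
        have := Nat.le_ceil (-u); linarith
      set N := max n ⌈-u⌉₊ with hN
      rw [← hcompat u n N (le_max_left _ _) hun,
          ← hcompat u ⌈-u⌉₊ N (le_max_right _ _) hceil]
    have hceil : 0 ≤ s + (⌈-s⌉₊ : ℝ) := by
      have := Nat.le_ceil (-s); linarith
    rw [← hSadd t ht (s + (⌈-s⌉₊ : ℝ)) hceil]
    have h1 : t + (s + (⌈-s⌉₊ : ℝ)) = (t + s) + (⌈-s⌉₊ : ℝ) := by ring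
    rw [h1]
    exact hwd (t + s) ⌈-s⌉₊ (by linarith)
  · rintro y ⟨s, rfl⟩
    have hceil : 0 ≤ s + (⌈-s⌉₊ : ℝ) := by
      have := Nat.le_ceil (-s); linarith
    have := hAinv (s + (⌈-s⌉₊ : ℝ)) hceil
    have hmem : S (s + (⌈-s⌉₊ : ℝ)) ((g ⌈-s⌉₊ : A) : H) ∈ S (s + (⌈-s⌉₊ : ℝ)) '' A :=
      ⟨(g ⌈-s⌉₊ : H), (g ⌈-s⌉₊).2, rfl⟩
    rwa [this] at hmem
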